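/- Let θ₃(s) = ∑_{k∈ℤ} exp(−πk²s) for s > 0. Then for every s > 0, θ₃″(s)·θ₃(s) − θ₃′(s)² > −θ₃′(s)·θ₃(s)/s > 0. -/

import Mathlib

open Real Filter Topology HurwitzZeta

noncomputable def th (m : ℕ) (s : ℝ) : ℝ :=
  ∑' k : ℤ, (Real.pi * (k:ℝ)^2)^m * Real.exp (-Real.pi * (k:ℝ)^2 * s)

lemma summable_nat_th (m : ℕ) {s : ℝ} (hs : 0 < s) :
    Summable (fun n : ℕ => (Real.pi * (n:ℝ)^2)^m * Real.exp (-Real.pi * (n:ℝ)^2 * s)) := by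
  have hq : Real.exp (-Real.pi * s) < 1 := by
    rw [Real.exp_lt_one_iff]
    nlinarith [Real.pi_pos]
  have hq0 : 0 < Real.exp (-Real.pi * s) := Real.exp_pos _
  have hsum : Summable (fun n : ℕ => Real.pi^m * ((n:ℝ)^(2*m) * Real.exp (-Real.pi * s)^n)) := by
    apply Summable.mul_left
    have := summable_pow_mul_geometric_of_norm_lt_one (R := ℝ) (2*m)
      (r := Real.exp (-Real.pi * s)) (by rwa [Real.norm_eq_abs, abs_of_pos hq0])
    simpa using this
  apply Summable.of_nonneg_of_le (fun n => by positivity) _ hsum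
  intro n
  have h1 : Real.exp (-Real.pi * (n:ℝ)^2 * s) = Real.exp (-Real.pi * s) ^ (n^2 : ℕ) := by
    rw [← Real.exp_nat_mul]
    push_cast
    ring_nf
  have h2 : (Real.pi * (n:ℝ)^2)^m = Real.pi^m * (n:ℝ)^(2*m) := by
    rw [mul_pow, ← pow_mul, mul_comm 2 m]
  rw [h1, h2, mul_assoc]
  have h3 : Real.exp (-Real.pi*s) ^ (n^2:ℕ) ≤ Real.exp (-Real.pi*s) ^ (n:ℕ) :=
    pow_le_pow_of_le_one hq0.le hq.le (by nlinarith)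
  have h4 : (0:ℝ) ≤ (n:ℝ)^(2*m) := by positivity
  have h5 : (0:ℝ) ≤ Real.pi^m := pow_nonneg Real.pi_pos.le m
  exact mul_le_mul_of_nonneg_left (mul_le_mul_of_nonneg_left h3 h4) h5

lemma summable_th (m : ℕ) {s : ℝ} (hs : 0 < s) :
    Summable (fun k : ℤ => (Real.pi * (k:ℝ)^2)^m * Real.exp (-Real.pi * (k:ℝ)^2 * s)) := by
  apply Summable.of_nat_of_neg_add_one
  · exact_mod_cast summable_nat_th m hs
  · have := (summable_nat_th m hs).comp_injective
      (fun a b h => by simpa using h : Function.Injective (fun x : ℕ => x+1))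
    apply this.congr
    intro n
    simp only [Function.comp]
    push_cast
    rw [show (-((n:ℝ)+1))^2 = ((n:ℝ)+1)^2 from by ring]

lemma hasDerivAt_th (m : ℕ) {s : ℝ} (hs : 0 < s) :
    HasDerivAt (th m) (-(th (m+1) s)) s := by
  have h2 : (0:ℝ) < s/2 := by linarith
  have hmem : s ∈ Set.Ioi (s/2) := by simp; linarith
  have hderiv : ∀ (k : ℤ) (y : ℝ), y ∈ Set.Ioi (s/2) →
      HasDerivAt (fun x => (Real.pi * (k:ℝ)^2)^m * Real.exp (-Real.pi * (k:ℝ)^2 * x))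
        (-((Real.pi * (k:ℝ)^2)^(m+1) * Real.exp (-Real.pi * (k:ℝ)^2 * y))) y := by
    intro k y _
    have hd : HasDerivAt (fun x:ℝ => -Real.pi*(k:ℝ)^2*x) (-Real.pi*(k:ℝ)^2) y := by
      simpa only [mul_one] using (hasDerivAt_id' y).const_mul (-Real.pi*(k:ℝ)^2)
    have := hd.exp.const_mul ((Real.pi*(k:ℝ)^2)^m)
    refine this.congr_deriv ?_
    ring
  have hbound : ∀ (k : ℤ) (y : ℝ), y ∈ Set.Ioi (s/2) →
      ‖-((Real.pi * (k:ℝ)^2)^(m+1) * Real.exp (-Real.pi * (k:ℝ)^2 * y))‖ ≤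
        (Real.pi * (k:ℝ)^2)^(m+1) * Real.exp (-Real.pi * (k:ℝ)^2 * (s/2)) := by
    intro k y hy
    rw [norm_neg, Real.norm_eq_abs, abs_of_nonneg (by positivity)]
    have h3 : Real.exp (-Real.pi * (k:ℝ)^2 * y) ≤ Real.exp (-Real.pi * (k:ℝ)^2 * (s/2)) := by
      apply Real.exp_le_exp.2
      have : s/2 ≤ y := le_of_lt hy
      nlinarith [mul_nonneg (mul_nonneg Real.pi_pos.le (sq_nonneg (k:ℝ))) (sub_nonneg.2 this)]
    exact mul_le_mul_of_nonneg_left h3 (by positivity)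
  have key := hasDerivAt_tsum_of_isPreconnected (summable_th (m+1) h2) isOpen_Ioi
    isPreconnected_Ioi hderiv hbound hmem (summable_th m hs) hmem
  have heq : (∑' k:ℤ, -((Real.pi * (k:ℝ)^2)^(m+1) * Real.exp (-Real.pi * (k:ℝ)^2 * s)))
      = -(th (m+1) s) := by
    rw [tsum_neg]; rfl
  rw [heq] at key
  exact key

noncomputable def tl (m : ℕ) (s : ℝ) : ℝ :=
  ∑' n : ℕ, (Real.pi * ((n:ℝ)+1)^2)^m * Real.exp (-Real.pi * ((n:ℝ)+1)^2 * s)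

lemma summable_tl (m : ℕ) {s : ℝ} (hs : 0 < s) :
    Summable (fun n : ℕ => (Real.pi * ((n:ℝ)+1)^2)^m * Real.exp (-Real.pi * ((n:ℝ)+1)^2 * s)) := by
  have := (summable_nat_th m hs).comp_injective
    (fun a b h => by simpa using h : Function.Injective (fun x : ℕ => x+1))
  apply this.congr
  intro n
  simp only [Function.comp]
  push_cast
  ring_nf

set_option maxHeartbeats 1000000 in
lemma th_split (m : ℕ) {s : ℝ} (hs : 0 < s) :
    th m s = (if m = 0 then 1 else 0) + 2 * tl m s := by
  have hnat : Summable (fun n : ℕ =>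
      (Real.pi * (((n:ℤ)):ℝ)^2)^m * Real.exp (-Real.pi * (((n:ℤ)):ℝ)^2 * s)) := by
    have := summable_nat_th m hs
    apply this.congr
    intro n; push_cast; ring_nf
  have hneg : Summable (fun n : ℕ =>
      (Real.pi * (Int.cast (-((n:ℤ)+1)) : ℝ)^2)^m * Real.exp (-Real.pi * (Int.cast (-((n:ℤ)+1)) : ℝ)^2 * s)) := by
    apply (summable_tl m hs).congr
    intro n; push_cast
    rw [show (-((n:ℝ)+1))^2 = ((n:ℝ)+1)^2 from by ring]
  rw [th, tsum_of_nat_of_neg_add_one hnat hneg]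
  have h1 : (∑' n : ℕ, (Real.pi * (((n:ℤ)):ℝ)^2)^m * Real.exp (-Real.pi * (((n:ℤ)):ℝ)^2 * s))
      = (if m = 0 then 1 else 0) + tl m s := by
    rw [Summable.tsum_eq_zero_add hnat]
    congr 1
    · simp only [Int.cast_natCast, Nat.cast_zero]
      rcases Nat.eq_zero_or_pos m with hm | hm
      · subst hm; norm_num
      · rw [if_neg hm.ne']
        norm_num [zero_pow hm.ne']
    · rw [tl]
      apply tsum_congr
      intro n; push_cast; ring_nf
  have h2 : (∑' n : ℕ, (Real.pi * (Int.cast (-((n:ℤ)+1)) : ℝ)^2)^m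
      * Real.exp (-Real.pi * (Int.cast (-((n:ℤ)+1)) : ℝ)^2 * s)) = tl m s := by
    apply tsum_congr
    intro n; push_cast
    rw [show (-((n:ℝ)+1))^2 = ((n:ℝ)+1)^2 from by ring]
  rw [h1, h2]; ring

lemma lin_le_two_pow (n : ℕ) : 2*n+3 ≤ 2^(n+2) := by
  induction n with
  | zero => norm_num
  | succ k ih =>
    have h2 : (2:ℕ) ≤ 2^(k+2) := by
      calc (2:ℕ) ≤ 2^1 := by norm_num
        _ ≤ 2^(k+2) := Nat.pow_le_pow_right (by norm_num) (by omega)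
    calc 2*(k+1)+3 = (2*k+3)+2 := by ring
      _ ≤ 2^(k+2) + 2^(k+2) := by omega
      _ = 2^(k+3) := by ring

lemma sq_le_two_pow (n : ℕ) : (n+1)^2 ≤ 2^(n+2) := by
  induction n with
  | zero => norm_num
  | succ k ih =>
    have := lin_le_two_pow k
    calc (k+2)^2 = (k+1)^2 + (2*k+3) := by ring
      _ ≤ 2^(k+2) + 2^(k+2) := by omega
      _ = 2^(k+3) := by ring

lemma exp_term_eq {s : ℝ} (n : ℕ) :
    Real.exp (-Real.pi*((n:ℝ)+1)^2*s) = Real.exp (-Real.pi*s)^((n+1)^2) := by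
  rw [← Real.exp_nat_mul]
  congr 1
  push_cast
  ring

lemma tl0_le {s : ℝ} (hs : 0 < s) :
    tl 0 s ≤ Real.exp (-Real.pi*s) * (1 - Real.exp (-Real.pi*s))⁻¹ := by
  set q := Real.exp (-Real.pi*s) with hq
  have hq0 : 0 < q := Real.exp_pos _
  have hq1 : q < 1 := by
    rw [hq, Real.exp_lt_one_iff]; nlinarith [Real.pi_pos]
  have hgeo : Summable (fun n : ℕ => q^(n+1)) := by
    apply Summable.comp_injective (summable_geometric_of_lt_one hq0.le hq1)
      (fun a b h => by simpa using h : Function.Injective (fun x : ℕ => x+1))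
  have h1 : tl 0 s ≤ ∑' n : ℕ, q^(n+1) := by
    rw [tl]
    apply Summable.tsum_le_tsum _ (summable_tl 0 hs) hgeo
    intro n
    rw [pow_zero, one_mul, exp_term_eq]
    exact pow_le_pow_of_le_one hq0.le hq1.le (by nlinarith)
  calc tl 0 s ≤ ∑' n : ℕ, q^(n+1) := h1
    _ = q * (1-q)⁻¹ := by
      rw [show (fun n : ℕ => q^(n+1)) = (fun n : ℕ => q * q^n) from by
        funext n; rw [pow_succ]; ring, tsum_mul_left, tsum_geometric_of_lt_one hq0.le hq1]

lemma exp_pi_gt : (19:ℝ) < Real.exp Real.pi := by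
  have h3 : (3:ℝ) ≤ Real.pi := by nlinarith [Real.pi_gt_d6]
  have h4 : Real.exp 3 ≤ Real.exp Real.pi := Real.exp_le_exp.2 h3
  have e3 : Real.exp 3 = Real.exp 1 ^ 3 := by
    rw [← Real.exp_nat_mul]; norm_num
  have h5 : (2.7182818283:ℝ)^3 ≤ Real.exp 1 ^ 3 :=
    pow_le_pow_left₀ (by norm_num) Real.exp_one_gt_d9.le 3
  nlinarith [h5]

lemma q_le_19 {s : ℝ} (hs1 : 1 ≤ s) : Real.exp (-Real.pi*s) ≤ 1/19 := by
  have h1 : Real.exp (-Real.pi*s) ≤ Real.exp (-Real.pi) :=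
    Real.exp_le_exp.2 (by nlinarith [Real.pi_pos])
  have h2 : Real.exp (-Real.pi) = (Real.exp Real.pi)⁻¹ := Real.exp_neg _
  have h3 := exp_pi_gt
  have h4 : (Real.exp Real.pi)⁻¹ ≤ 1/19 := by
    rw [inv_le_comm₀ (by positivity) (by norm_num)]
    nlinarith
  linarith [h1, h2 ▸ h1, h4, h2.symm ▸ h4]

lemma qs_le_19 {s : ℝ} (hs1 : 1 ≤ s) : s * Real.exp (-Real.pi*s) ≤ 1/19 := by
  have h1 : 19*s ≤ Real.exp (Real.pi*s) := by
    have he : Real.exp (Real.pi*s) = Real.exp Real.pi * Real.exp (Real.pi*(s-1)) := by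
      rw [← Real.exp_add]; ring_nf
    have h2 : Real.pi*(s-1) + 1 ≤ Real.exp (Real.pi*(s-1)) := Real.add_one_le_exp _
    have h3 : s ≤ Real.pi*(s-1) + 1 := by nlinarith [Real.pi_gt_d6]
    nlinarith [exp_pi_gt, Real.exp_pos (Real.pi*(s-1))]
  have hmul : Real.exp (-Real.pi*s) * Real.exp (Real.pi*s) = 1 := by
    rw [← Real.exp_add, show -Real.pi*s + Real.pi*s = 0 from by ring, Real.exp_zero]
  have he0 : 0 < Real.exp (-Real.pi*s) := Real.exp_pos _
  nlinarith [mul_le_mul_of_nonneg_left h1 he0.le]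

lemma tl1_le {s : ℝ} (hs1 : 1 ≤ s) :
    tl 1 s ≤ Real.pi*Real.exp (-Real.pi*s)
      + 8*Real.pi*Real.exp (-Real.pi*s)^4*(1-2*Real.exp (-Real.pi*s)^2)⁻¹ := by
  have hs : 0 < s := lt_of_lt_of_le one_pos hs1
  set q := Real.exp (-Real.pi*s) with hqdef
  have hq0 : 0 < q := Real.exp_pos _
  have hq19 : q ≤ 1/19 := q_le_19 hs1
  have hq1 : q < 1 := by linarith
  have h2q : 2*q^2 < 1 := by nlinarith
  have sgeo : Summable (fun n : ℕ => 8*Real.pi*q^4*(2*q^2)^n) :=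
    (summable_geometric_of_lt_one (by positivity) h2q).mul_left _
  have hsum := summable_tl 1 hs
  rw [tl, Summable.tsum_eq_zero_add hsum]
  have hfirst : (Real.pi * (((0:ℕ):ℝ)+1)^2)^1 * Real.exp (-Real.pi * (((0:ℕ):ℝ)+1)^2 * s)
      = Real.pi * q := by
    norm_num
    rw [hqdef]
    ring_nf
  rw [hfirst]
  have hshift : Summable (fun n : ℕ =>
      (Real.pi * (((n+1:ℕ):ℝ)+1)^2)^1 * Real.exp (-Real.pi * (((n+1:ℕ):ℝ)+1)^2 * s)) :=
    hsum.comp_injective (fun a b h => by simpa using h : Function.Injective (fun x : ℕ => x+1))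
  have htail : (∑' n : ℕ, (Real.pi * (((n+1:ℕ):ℝ)+1)^2)^1
        * Real.exp (-Real.pi * (((n+1:ℕ):ℝ)+1)^2 * s))
      ≤ ∑' n : ℕ, 8*Real.pi*q^4*(2*q^2)^n := by
    apply Summable.tsum_le_tsum _ hshift sgeo
    intro n
    have hc1 : (((n+1:ℕ):ℝ)+1) = (n:ℝ)+2 := by push_cast; ring
    have hexp : Real.exp (-Real.pi * ((n:ℝ)+2)^2 * s) = q^((n+2)^2) := by
      rw [hqdef, ← Real.exp_nat_mul]
      congr 1
      push_cast
      ring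
    have hA : ((n:ℝ)+2)^2 ≤ (2:ℝ)^(n+3) := by
      have := sq_le_two_pow (n+1)
      have hcast : (((n+2)^2 : ℕ) : ℝ) ≤ (((2:ℕ)^(n+3) : ℕ) : ℝ) := by
        exact_mod_cast (by omega : ((n+1)+1)^2 ≤ 2^((n+1)+2))
      push_cast at hcast
      convert hcast using 2 <;> push_cast <;> ring
    have hB : q^((n+2)^2) ≤ (q^2)^(n+2) := by
      rw [← pow_mul]
      apply pow_le_pow_of_le_one hq0.le hq1.le
      nlinarith
    calc (Real.pi * (((n+1:ℕ):ℝ)+1)^2)^1 * Real.exp (-Real.pi * (((n+1:ℕ):ℝ)+1)^2 * s)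
        = Real.pi * ((n:ℝ)+2)^2 * q^((n+2)^2) := by rw [hc1, pow_one, hexp]
      _ ≤ Real.pi * (2:ℝ)^(n+3) * q^((n+2)^2) := by
          apply mul_le_mul_of_nonneg_right _ (by positivity)
          exact mul_le_mul_of_nonneg_left hA Real.pi_pos.le
      _ ≤ Real.pi * (2:ℝ)^(n+3) * (q^2)^(n+2) := by
          apply mul_le_mul_of_nonneg_left hB (by positivity)
      _ = 8*Real.pi*q^4*(2*q^2)^n := by
          rw [mul_pow]
          ring
    done
  have hgeosum : (∑' n : ℕ, 8*Real.pi*q^4*(2*q^2)^n) = 8*Real.pi*q^4*(1-2*q^2)⁻¹ := by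
    rw [tsum_mul_left, tsum_geometric_of_lt_one (by positivity) h2q]
  linarith [htail, hgeosum ▸ htail]

lemma tl_nonneg (m : ℕ) (s : ℝ) : 0 ≤ tl m s :=
  tsum_nonneg (fun n => by positivity)

lemma tl1_ge {s : ℝ} (hs : 0 < s) : Real.pi*Real.exp (-Real.pi*s) ≤ tl 1 s := by
  have h := Summable.le_tsum (summable_tl 1 hs) 0 (fun j _ => by positivity)
  calc Real.pi*Real.exp (-Real.pi*s)
      = (Real.pi * (((0:ℕ):ℝ)+1)^2)^1 * Real.exp (-Real.pi * (((0:ℕ):ℝ)+1)^2 * s) := by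
        norm_num
    _ ≤ tl 1 s := h

lemma tl2_ge {s : ℝ} (hs : 0 < s) : Real.pi^2*Real.exp (-Real.pi*s) ≤ tl 2 s := by
  have h := Summable.le_tsum (summable_tl 2 hs) 0 (fun j _ => by positivity)
  calc Real.pi^2*Real.exp (-Real.pi*s)
      = (Real.pi * (((0:ℕ):ℝ)+1)^2)^2 * Real.exp (-Real.pi * (((0:ℕ):ℝ)+1)^2 * s) := by
        norm_num
    _ ≤ tl 2 s := h

lemma th0_eq {s : ℝ} (hs : 0 < s) : th 0 s = 1 + 2 * tl 0 s := by
  simpa using th_split 0 hs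

lemma th1_eq {s : ℝ} (hs : 0 < s) : th 1 s = 2 * tl 1 s := by
  simpa using th_split 1 hs

lemma th2_eq {s : ℝ} (hs : 0 < s) : th 2 s = 2 * tl 2 s := by
  simpa using th_split 2 hs

lemma th0_ge {s : ℝ} (hs : 0 < s) : 1 ≤ th 0 s := by
  rw [th0_eq hs]
  linarith [tl_nonneg 0 s]

lemma th1_pos {s : ℝ} (hs : 0 < s) : 0 < th 1 s := by
  rw [th1_eq hs]
  have := tl1_ge hs
  nlinarith [Real.exp_pos (-Real.pi*s), Real.pi_pos]

set_option maxHeartbeats 1000000 in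
lemma G_pos_of_one_le {s : ℝ} (hs1 : 1 ≤ s) :
    0 < -(th 1 s) * th 0 s + s * (th 2 s * th 0 s - (th 1 s)^2) := by
  have hs : 0 < s := lt_of_lt_of_le one_pos hs1
  set q := Real.exp (-Real.pi*s) with hqdef
  have hq0 : 0 < q := Real.exp_pos _
  have hq19 : q ≤ 1/19 := q_le_19 hs1
  have hqs : s * q ≤ 1/19 := qs_le_19 hs1
  have hπ : 3.1415 < Real.pi := by nlinarith [Real.pi_gt_d6]
  have hπq : 0 < Real.pi * q := mul_pos Real.pi_pos hq0
  -- upper bound on th 0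
  have h0u : th 0 s ≤ 10/9 := by
    rw [th0_eq hs]
    have h1 := tl0_le hs
    rw [← hqdef] at h1
    have h2 : (1-q)⁻¹ ≤ 19/18 := by
      rw [inv_le_comm₀ (by nlinarith) (by norm_num)]
      nlinarith
    have h3 : tl 0 s ≤ q * (19/18) := by
      calc tl 0 s ≤ q * (1-q)⁻¹ := h1
        _ ≤ q * (19/18) := by nlinarith
    nlinarith
  have h0l : 1 ≤ th 0 s := th0_ge hs
  -- upper bound on th 1
  have h1u : th 1 s ≤ (202/100) * Real.pi * q := by
    rw [th1_eq hs]
    have h1 := tl1_le hs1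
    rw [← hqdef] at h1
    have hd : (0:ℝ) < 1-2*q^2 := by nlinarith
    have h2 : (1-2*q^2)⁻¹ ≤ 2 := by
      rw [inv_le_comm₀ hd (by norm_num)]
      nlinarith
    have h3 : 8*Real.pi*q^4*(1-2*q^2)⁻¹ ≤ 8*Real.pi*q^4*2 :=
      mul_le_mul_of_nonneg_left h2 (by positivity)
    have hcube : q^3 ≤ (1/19)^3 := pow_le_pow_left₀ hq0.le hq19 3
    have h4 : 16*Real.pi*q^4 ≤ (1/100)*Real.pi*q := by
      nlinarith [mul_le_mul_of_nonneg_left hcube (by positivity : (0:ℝ) ≤ 16*Real.pi*q), hπq]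
    linarith
  have h1l : 0 ≤ th 1 s := (th1_pos hs).le
  -- lower bound on th 2
  have h2l : 2 * Real.pi^2 * q ≤ th 2 s := by
    rw [th2_eq hs]
    linarith [tl2_ge hs]
  have h2nn : 0 ≤ th 2 s := le_trans (by positivity) h2l
  -- assemble
  have hA : th 1 s * th 0 s ≤ (202/100) * Real.pi * q * (10/9) :=
    mul_le_mul h1u h0u (by linarith) (by positivity)
  have hsq : (th 1 s)^2 ≤ ((202/100)*Real.pi*q)^2 := by
    nlinarith [mul_le_mul h1u h1u h1l (by positivity : (0:ℝ) ≤ (202/100)*Real.pi*q)]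
  have hB : s * (th 1 s)^2 ≤ s * ((202/100)*Real.pi*q)^2 :=
    mul_le_mul_of_nonneg_left hsq hs.le
  have hB' : s * ((202/100)*Real.pi*q)^2 ≤ (202/100*Real.pi)^2 * q * (1/19) := by
    have h5 : s * ((202/100)*Real.pi*q)^2 = ((202/100*Real.pi)^2*q) * (s*q) := by ring
    rw [h5]
    exact mul_le_mul_of_nonneg_left hqs (by positivity)
  have hC : s * (2*Real.pi^2*q) ≤ s * (th 2 s * th 0 s) := by
    apply mul_le_mul_of_nonneg_left _ hs.le
    calc 2*Real.pi^2*q ≤ th 2 s := h2l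
      _ ≤ th 2 s * th 0 s := le_mul_of_one_le_right h2nn h0l
  have hD : 2*Real.pi^2*q ≤ s * (2*Real.pi^2*q) :=
    le_mul_of_one_le_left (by positivity) hs1
  have hE : (202/100) * Real.pi * q * (10/9) + (202/100*Real.pi)^2 * q * (1/19)
      < 2 * Real.pi^2 * q := by
    have hY : 3.1415 * (Real.pi*q) < Real.pi * (Real.pi*q) :=
      mul_lt_mul_of_pos_right hπ hπq
    nlinarith [hπq]
  have expand : -(th 1 s) * th 0 s + s * (th 2 s * th 0 s - (th 1 s)^2)
      = s * (th 2 s * th 0 s) - s * (th 1 s)^2 - th 1 s * th 0 s := by ring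
  rw [expand]
  linarith

noncomputable def theta3 (s : ℝ) : ℝ := ∑' k : ℤ, Real.exp (-Real.pi * (k:ℝ)^2 * s)

lemma theta3_eq : theta3 = th 0 := by
  funext s
  simp [theta3, th]

lemma th0_FE {x : ℝ} (hx : 0 < x) : th 0 x⁻¹ = Real.sqrt x * th 0 x := by
  have hxinv : 0 < x⁻¹ := by positivity
  have a0 : (((0:ℝ):UnitAddCircle)) = 0 := by norm_num
  have h1 : ∀ {y : ℝ}, 0 < y → th 0 y = evenKernel ((0:ℝ):UnitAddCircle) y := by
    intro y hy
    rw [← (hasSum_int_evenKernel (0:ℝ) hy).tsum_eq, th]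
    apply tsum_congr
    intro n
    norm_num
  have hFE := evenKernel_functional_equation ((0:ℝ):UnitAddCircle) x
  rw [a0, evenKernel_eq_cosKernel_of_zero] at hFE
  -- hFE : cosKernel 0 x = 1 / x ^ (1/2:ℝ) * cosKernel 0 (1/x)
  have h2 : th 0 x = 1 / x ^ ((1:ℝ)/2) * th 0 x⁻¹ := by
    rw [h1 hx, h1 hxinv, a0, evenKernel_eq_cosKernel_of_zero, ← one_div x]
    exact hFE
  have h3 : x ^ ((1:ℝ)/2) = Real.sqrt x := (Real.sqrt_eq_rpow x).symm
  rw [h3] at h2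
  have hs0 : 0 < Real.sqrt x := Real.sqrt_pos.2 hx
  field_simp at h2
  rw [one_div] at h2
  linarith

lemma th1_FE {x : ℝ} (hx : 0 < x) :
    th 1 x⁻¹ = x*Real.sqrt x/2 * th 0 x - x^2*Real.sqrt x * th 1 x := by
  have hxinv : 0 < x⁻¹ := by positivity
  have hs0 : 0 < Real.sqrt x := Real.sqrt_pos.2 hx
  have hsq : Real.sqrt x * Real.sqrt x = x := Real.mul_self_sqrt hx.le
  -- derivative of LHS composite
  have hL : HasDerivAt (fun y => th 0 y⁻¹) (-(th 1 x⁻¹) * -(x^2)⁻¹) x :=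
    (hasDerivAt_th 0 hxinv).comp x (hasDerivAt_inv hx.ne')
  -- derivative of RHS
  have hR : HasDerivAt (fun y => Real.sqrt y * th 0 y)
      (1/(2*Real.sqrt x) * th 0 x + Real.sqrt x * -(th 1 x)) x :=
    (Real.hasDerivAt_sqrt hx.ne').mul (hasDerivAt_th 0 hx)
  -- the two functions agree near x
  have heq : (fun y => th 0 y⁻¹) =ᶠ[nhds x] (fun y => Real.sqrt y * th 0 y) := by
    apply Filter.eventuallyEq_of_mem (isOpen_Ioi.mem_nhds (Set.mem_Ioi.2 hx))
    intro y hy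
    exact th0_FE hy
  have hL' : HasDerivAt (fun y => Real.sqrt y * th 0 y) (-(th 1 x⁻¹) * -(x^2)⁻¹) x :=
    HasDerivAt.congr_of_eventuallyEq hL heq.symm
  have huniq := hL'.unique hR
  have hx2 : (0:ℝ) < x^2 := by positivity
  field_simp at huniq
  rw [one_div] at huniq
  have h2s : (2*Real.sqrt x) ≠ 0 := by positivity
  apply mul_right_cancel₀ h2s
  rw [← mul_assoc, huniq]
  linear_combination (-(x*th 0 x)) * hsq

lemma th2_FE {x : ℝ} (hx : 0 < x) :
    th 2 x⁻¹ = 3/4*x^2*Real.sqrt x*th 0 x - 3*x^3*Real.sqrt x*th 1 x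
      + x^4*Real.sqrt x*th 2 x := by
  have hxinv : 0 < x⁻¹ := by positivity
  have hs0 : 0 < Real.sqrt x := Real.sqrt_pos.2 hx
  have hsq : Real.sqrt x * Real.sqrt x = x := Real.mul_self_sqrt hx.le
  have hL : HasDerivAt (fun y => th 1 y⁻¹) (-(th 2 x⁻¹) * -(x^2)⁻¹) x :=
    (hasDerivAt_th 1 hxinv).comp x (hasDerivAt_inv hx.ne')
  have h_a : HasDerivAt (fun y => y * Real.sqrt y)
      (1*Real.sqrt x + x*(1/(2*Real.sqrt x))) x :=
    (hasDerivAt_id x).mul (Real.hasDerivAt_sqrt hx.ne')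
  have h_p1 := (h_a.div_const 2).mul (hasDerivAt_th 0 hx)
  have h_b : HasDerivAt (fun y => y^2 * Real.sqrt y)
      ((2:ℕ)*x^(2-1)*Real.sqrt x + x^2*(1/(2*Real.sqrt x))) x :=
    (hasDerivAt_pow 2 x).mul (Real.hasDerivAt_sqrt hx.ne')
  have h_p2 := h_b.mul (hasDerivAt_th 1 hx)
  have hR := h_p1.sub h_p2
  have heq : (fun y => th 1 y⁻¹) =ᶠ[nhds x]
      (fun y => y*Real.sqrt y/2 * th 0 y - y^2*Real.sqrt y * th 1 y) := by
    apply Filter.eventuallyEq_of_mem (isOpen_Ioi.mem_nhds (Set.mem_Ioi.2 hx))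
    intro y hy
    exact th1_FE hy
  have hL' := HasDerivAt.congr_of_eventuallyEq hL heq.symm
  have huniq := hL'.unique hR
  have hx2 : (0:ℝ) < x^2 := by positivity
  field_simp at huniq
  rw [one_div] at huniq
  norm_num at huniq
  have h16 : (16:ℝ)*(Real.sqrt x)^2 ≠ 0 := by positivity
  apply mul_right_cancel₀ h16
  linear_combination (4*Real.sqrt x) * huniq + (-(4*x^2*Real.sqrt x*th 0 x)
    + 8*x^3*Real.sqrt x*th 1 x) * hsq

lemma deriv_theta3 {s : ℝ} (hs : 0 < s) : deriv theta3 s = -(th 1 s) := by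
  rw [theta3_eq]
  exact (hasDerivAt_th 0 hs).deriv

lemma deriv2_theta3 {s : ℝ} (hs : 0 < s) : deriv (deriv theta3) s = th 2 s := by
  have h2 : deriv theta3 =ᶠ[nhds s] (fun x => -(th 1 x)) := by
    apply Filter.eventuallyEq_of_mem (isOpen_Ioi.mem_nhds (Set.mem_Ioi.2 hs))
    intro y hy
    exact deriv_theta3 hy
  rw [h2.deriv_eq]
  have h3 : HasDerivAt (fun x => -(th 1 x)) (-(-(th 2 s))) s := (hasDerivAt_th 1 hs).neg
  rw [h3.deriv, neg_neg]

lemma G_pos {s : ℝ} (hs : 0 < s) :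
    0 < -(th 1 s) * th 0 s + s * (th 2 s * th 0 s - (th 1 s)^2) := by
  rcases le_or_gt 1 s with h | h
  · exact G_pos_of_one_le h
  · set x := s⁻¹ with hxdef
    have hx : 0 < x := by positivity
    have hmul : s * x = 1 := mul_inv_cancel₀ hs.ne'
    have hx1 : 1 ≤ x := by nlinarith
    have hsx : s = x⁻¹ := by rw [hxdef, inv_inv]
    rw [hsx, th0_FE hx, th1_FE hx, th2_FE hx]
    have hG := G_pos_of_one_le hx1
    have hsq : Real.sqrt x * Real.sqrt x = x := Real.mul_self_sqrt hx.le
    have hs0 : 0 < Real.sqrt x := Real.sqrt_pos.2 hx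
    have key : -(x*Real.sqrt x/2*th 0 x - x^2*Real.sqrt x*th 1 x) * (Real.sqrt x*th 0 x)
        + x⁻¹*((3/4*x^2*Real.sqrt x*th 0 x - 3*x^3*Real.sqrt x*th 1 x
            + x^4*Real.sqrt x*th 2 x)*(Real.sqrt x*th 0 x)
          - (x*Real.sqrt x/2*th 0 x - x^2*Real.sqrt x*th 1 x)^2)
        = x^3 * (-(th 1 x)*th 0 x + x*(th 2 x*th 0 x - (th 1 x)^2)) := by
      clear_value x
      field_simp
      linear_combination (-(2*th 0 x*(th 0 x - x*2*th 1 x)*4) + (2^2*th 0 x*(3*(th 0 x - x*th 1 x*4) + x^2*4*th 2 x) - (th 0 x - x*2*th 1 x)^2*4)) * hsq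
    rw [key]
    exact mul_pos (by positivity) hG

theorem stmt14 (s : ℝ) (hs : 0 < s) :
    deriv (deriv theta3) s * theta3 s - (deriv theta3 s)^2
      > -(deriv theta3 s) * theta3 s / s ∧
    -(deriv theta3 s) * theta3 s / s > 0 := by
  have h0 : theta3 s = th 0 s := by rw [theta3_eq]
  have hd1 : deriv theta3 s = -(th 1 s) := deriv_theta3 hs
  have hd2 : deriv (deriv theta3) s = th 2 s := deriv2_theta3 hs
  rw [h0, hd1, hd2]
  have hG := G_pos hs
  have h1 := th1_pos hs
  have h2 := th0_ge hs
  constructor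
  · rw [gt_iff_lt, div_lt_iff₀ hs]
    nlinarith
  · rw [gt_iff_lt]
    apply div_pos _ hs
    nlinarith
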